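/- Let L_1, L_2, L_3, L_4 be 2-dimensional subspaces of ℂ⁴ that are pairwise transverse (L_i ∩ L_j = 0 for i ≠ j) and suppose furthermore that the instance is generic in the sense that the associated quadratic equation has two distinct roots. Identify 2-planes H meeting L_1, L_2, L_3 nontrivially with points of the quadric surface (second ruling). Then, assuming ℂ⁴ = L_1 ⊕ L_2 with projections p_1, p_2, the set of 2-planes H with dim(H ∩ L_i) ≥ 1 for i = 1,2,3 is exactly { span(p_1(v), p_2(v)) : v ∈ L_3, v ≠ 0 }, and this set is parametrized by the projective line ℙ(L_3). -/
import Mathlib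


open Module

private lemma span_pair_smul (c d : ℂ) (a b : Fin 4 → ℂ) (hc : c ≠ 0) (hd : d ≠ 0) :
    Submodule.span ℂ {c • a, d • b} = (Submodule.span ℂ {a, b} : Submodule ℂ (Fin 4 → ℂ)) := by
  apply le_antisymm
  · rw [Submodule.span_le]
    rintro x hx
    rcases hx with rfl | rfl
    · exact Submodule.smul_mem _ _ (Submodule.subset_span (Set.mem_insert _ _))
    · exact Submodule.smul_mem _ _
        (Submodule.subset_span (Set.mem_insert_of_mem _ rfl))
  · rw [Submodule.span_le]
    rintro x hx
    rcases hx with rfl | rfl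
    · exact Submodule.mem_span_pair.mpr ⟨c⁻¹, 0, by simp [smul_smul, inv_mul_cancel₀ hc]⟩
    · exact Submodule.mem_span_pair.mpr ⟨0, d⁻¹, by simp [smul_smul, inv_mul_cancel₀ hd]⟩

private lemma finrank_span_pair (x y : Fin 4 → ℂ) (h : LinearIndependent ℂ ![x, y]) :
    finrank ℂ (Submodule.span ℂ {x, y} : Submodule ℂ (Fin 4 → ℂ)) = 2 := by
  have h2 : Set.range ![x, y] = {x, y} := by
    simp [Matrix.range_cons, Matrix.range_empty]; exact Set.pair_comm y x
  have := finrank_span_eq_card h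
  rw [h2] at this
  simpa using this

private lemma one_le_finrank_of_mem (K : Submodule ℂ (Fin 4 → ℂ)) (x : Fin 4 → ℂ)
    (hx : x ∈ K) (h0 : x ≠ 0) : 1 ≤ finrank ℂ K := by
  have : Nontrivial K := ⟨⟨x, hx⟩, 0, by simpa using h0⟩
  exact Module.finrank_pos

/-- with L₁, L₂, L₃ pairwise transverse 2-planes in ℂ⁴ and
p₁, p₂ the projections of ℂ⁴ = L₁ ⊕ L₂, the set of 2-planes H meeting L₁, L₂, L₃
nontrivially is exactly { span(p₁ v, p₂ v) : 0 ≠ v ∈ L₃ }, and this family is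
parametrized by the projective line ℙ(L₃): two nonzero vectors of L₃ give the
same plane iff they are proportional. -/
theorem second_ruling_parametrization
    (L₁ L₂ L₃ : Submodule ℂ (Fin 4 → ℂ))
    (hL₁ : finrank ℂ L₁ = 2) (hL₂ : finrank ℂ L₂ = 2) (hL₃ : finrank ℂ L₃ = 2)
    (h12 : L₁ ⊓ L₂ = ⊥) (h13 : L₁ ⊓ L₃ = ⊥) (h23 : L₂ ⊓ L₃ = ⊥)
    (p₁ p₂ : (Fin 4 → ℂ) →ₗ[ℂ] (Fin 4 → ℂ))
    (hp₁ : ∀ x, p₁ x ∈ L₁) (hp₂ : ∀ x, p₂ x ∈ L₂) (hsum : ∀ x, p₁ x + p₂ x = x) :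
    ({H : Submodule ℂ (Fin 4 → ℂ) | finrank ℂ H = 2 ∧
        1 ≤ finrank ℂ (H ⊓ L₁ : Submodule ℂ (Fin 4 → ℂ)) ∧
        1 ≤ finrank ℂ (H ⊓ L₂ : Submodule ℂ (Fin 4 → ℂ)) ∧
        1 ≤ finrank ℂ (H ⊓ L₃ : Submodule ℂ (Fin 4 → ℂ))} =
      {H | ∃ v : Fin 4 → ℂ, v ∈ L₃ ∧ v ≠ 0 ∧ H = Submodule.span ℂ {p₁ v, p₂ v}}) ∧
    (∀ v w : Fin 4 → ℂ, v ∈ L₃ → v ≠ 0 → w ∈ L₃ → w ≠ 0 →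
      ((Submodule.span ℂ {p₁ v, p₂ v} : Submodule ℂ (Fin 4 → ℂ)) =
          Submodule.span ℂ {p₁ w, p₂ w} ↔ ∃ c : ℂ, c ≠ 0 ∧ w = c • v)) := by
  -- p₁ v ≠ 0 for nonzero v ∈ L₃
  have hp1ne : ∀ v, v ∈ L₃ → v ≠ 0 → p₁ v ≠ 0 := by
    intro v hv hv0 h
    apply hv0
    have hve : v = p₂ v := by conv_lhs => rw [← hsum v, h, zero_add]
    have hvL : v ∈ L₂ := by nth_rewrite 1 [hve]; exact hp₂ v
    have hmem : v ∈ L₂ ⊓ L₃ := ⟨hvL, hv⟩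
    rw [h23] at hmem
    exact (Submodule.mem_bot ℂ).mp hmem
  have hp2ne : ∀ v, v ∈ L₃ → v ≠ 0 → p₂ v ≠ 0 := by
    intro v hv hv0 h
    apply hv0
    have hve : v = p₁ v := by conv_lhs => rw [← hsum v, h, add_zero]
    have hvL : v ∈ L₁ := by nth_rewrite 1 [hve]; exact hp₁ v
    have hmem : v ∈ L₁ ⊓ L₃ := ⟨hvL, hv⟩
    rw [h13] at hmem
    exact (Submodule.mem_bot ℂ).mp hmem
  -- linear independence of (p₁ v, p₂ v)
  have hindep : ∀ v, v ∈ L₃ → v ≠ 0 → LinearIndependent ℂ ![p₁ v, p₂ v] := by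
    intro v hv hv0
    rw [LinearIndependent.pair_iff]
    intro s t hst
    have h1 : s • p₁ v = -(t • p₂ v) := eq_neg_of_add_eq_zero_left hst
    have hmem : s • p₁ v ∈ L₁ ⊓ L₂ :=
      ⟨Submodule.smul_mem _ _ (hp₁ v),
        by rw [h1]; exact Submodule.neg_mem _ (Submodule.smul_mem _ _ (hp₂ v))⟩
    rw [h12] at hmem
    have hs : s • p₁ v = 0 := (Submodule.mem_bot ℂ).mp hmem
    have hs0 : s = 0 := by
      rcases smul_eq_zero.mp hs with h | h
      · exact h
      · exact absurd h (hp1ne v hv hv0)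
    refine ⟨hs0, ?_⟩
    rw [hs0, zero_smul, zero_add] at hst
    rcases smul_eq_zero.mp hst with h | h
    · exact h
    · exact absurd h (hp2ne v hv hv0)
  have hspan2 : ∀ v, v ∈ L₃ → v ≠ 0 →
      finrank ℂ (Submodule.span ℂ {p₁ v, p₂ v} : Submodule ℂ (Fin 4 → ℂ)) = 2 :=
    fun v hv hv0 => finrank_span_pair _ _ (hindep v hv hv0)
  have hvmem : ∀ v : Fin 4 → ℂ, v ∈ Submodule.span ℂ {p₁ v, p₂ v} := by
    intro v
    have h := Submodule.add_mem (Submodule.span ℂ {p₁ v, p₂ v})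
      (Submodule.subset_span (Set.mem_insert _ _))
      (Submodule.subset_span (Set.mem_insert_of_mem _ rfl))
    rwa [hsum v] at h
  -- key: H ∩ L₃ has rank ≤ 1 for H = span {p₁ v, p₂ v}
  have hkey : ∀ v w : Fin 4 → ℂ, v ∈ L₃ → v ≠ 0 → w ∈ L₃ → w ≠ 0 →
      w ∈ Submodule.span ℂ {p₁ v, p₂ v} → ∃ c : ℂ, c ≠ 0 ∧ w = c • v := by
    intro v w hv hv0 hw hw0 hwH
    set H := (Submodule.span ℂ {p₁ v, p₂ v} : Submodule ℂ (Fin 4 → ℂ)) with hH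
    have hle : Submodule.span ℂ {v} ≤ H ⊓ L₃ := by
      rw [Submodule.span_le, Set.singleton_subset_iff]
      exact ⟨hvmem v, hv⟩
    have hne2 : finrank ℂ (H ⊓ L₃ : Submodule ℂ (Fin 4 → ℂ)) ≤ 1 := by
      by_contra hgt
      push_neg at hgt
      have h2le : 2 ≤ finrank ℂ (H ⊓ L₃ : Submodule ℂ (Fin 4 → ℂ)) := hgt
      have heq : H ⊓ L₃ = H := by
        apply Submodule.eq_of_le_of_finrank_le inf_le_left
        rw [hspan2 v hv hv0]
        exact h2le
      have hp1H : p₁ v ∈ H := Submodule.subset_span (Set.mem_insert _ _)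
      have hp1L3 : p₁ v ∈ L₃ := by
        have h' : p₁ v ∈ H ⊓ L₃ := by rw [heq]; exact hp1H
        exact h'.2
      have : p₁ v ∈ L₁ ⊓ L₃ := ⟨hp₁ v, hp1L3⟩
      rw [h13] at this
      exact hp1ne v hv hv0 ((Submodule.mem_bot ℂ).mp this)
    have heq : Submodule.span ℂ {v} = H ⊓ L₃ := by
      apply Submodule.eq_of_le_of_finrank_le hle
      rw [finrank_span_singleton hv0]
      exact hne2
    have hwv : w ∈ Submodule.span ℂ {v} := by
      rw [heq]
      exact Submodule.mem_inf.mpr ⟨hwH, hw⟩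
    obtain ⟨c, hc⟩ := Submodule.mem_span_singleton.mp hwv
    refine ⟨c, ?_, hc.symm⟩
    rintro rfl
    rw [zero_smul] at hc
    exact hw0 hc.symm
  constructor
  · ext H
    simp only [Set.mem_setOf_eq]
    constructor
    · rintro ⟨hH2, hH1, hHL2, hHL3⟩
      -- pick nonzero elements
      have hex : ∀ (L : Submodule ℂ (Fin 4 → ℂ)),
          1 ≤ finrank ℂ (H ⊓ L : Submodule ℂ (Fin 4 → ℂ)) → ∃ x, x ∈ H ⊓ L ∧ x ≠ 0 := by
        intro L hL
        have : Nontrivial (H ⊓ L : Submodule ℂ (Fin 4 → ℂ)) := Module.finrank_pos_iff.mp hL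
        obtain ⟨x, hx⟩ := exists_ne (0 : (H ⊓ L : Submodule ℂ (Fin 4 → ℂ)))
        exact ⟨x, x.2, by simpa using hx⟩
      obtain ⟨a, ha, ha0⟩ := hex L₁ hH1
      obtain ⟨b, hb, hb0⟩ := hex L₂ hHL2
      obtain ⟨v, hvm, hv0⟩ := hex L₃ hHL3
      have hv3 : v ∈ L₃ := hvm.2
      -- a, b are linearly independent
      have hab : LinearIndependent ℂ ![a, b] := by
        rw [LinearIndependent.pair_iff]
        intro s t hst
        have h1 : s • a = -(t • b) := eq_neg_of_add_eq_zero_left hst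
        have hmem : s • a ∈ L₁ ⊓ L₂ :=
          ⟨Submodule.smul_mem _ _ ha.2,
            by rw [h1]; exact Submodule.neg_mem _ (Submodule.smul_mem _ _ hb.2)⟩
        rw [h12] at hmem
        have hs : s • a = 0 := (Submodule.mem_bot ℂ).mp hmem
        have hs0 : s = 0 := by
          rcases smul_eq_zero.mp hs with h | h
          · exact h
          · exact absurd h ha0
        refine ⟨hs0, ?_⟩
        rw [hs0, zero_smul, zero_add] at hst
        rcases smul_eq_zero.mp hst with h | h
        · exact h
        · exact absurd h hb0
      -- span {a, b} = H
      have hspanH : Submodule.span ℂ {a, b} = H := by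
        apply Submodule.eq_of_le_of_finrank_le
        · rw [Submodule.span_le]
          rintro x hx
          rcases hx with rfl | rfl
          · exact ha.1
          · exact hb.1
        · rw [hH2, finrank_span_pair _ _ hab]
      -- write v = α a + β b
      have hvspan : v ∈ Submodule.span ℂ {a, b} := hspanH ▸ hvm.1
      obtain ⟨α, β, hab_eq⟩ := Submodule.mem_span_pair.mp hvspan
      -- p₁ v = α a, p₂ v = β b
      have hdiff : p₁ v - α • a = β • b - p₂ v := by
        have : p₁ v + p₂ v = α • a + β • b := by rw [hsum v, hab_eq]
        linear_combination this
      have hmem : p₁ v - α • a ∈ L₁ ⊓ L₂ :=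
        ⟨Submodule.sub_mem _ (hp₁ v) (Submodule.smul_mem _ _ ha.2),
          by rw [hdiff]; exact Submodule.sub_mem _ (Submodule.smul_mem _ _ hb.2) (hp₂ v)⟩
      rw [h12] at hmem
      have h1 : p₁ v = α • a := by
        have := (Submodule.mem_bot ℂ).mp hmem
        linear_combination this
      have h2 : p₂ v = β • b := by
        have h3 : β • b - p₂ v = 0 := by rw [← hdiff]; simpa [sub_eq_zero] using h1
        linear_combination -h3
      have hα : α ≠ 0 := by
        rintro rfl
        rw [zero_smul] at h1
        exact hp1ne v hv3 hv0 h1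
      have hβ : β ≠ 0 := by
        rintro rfl
        rw [zero_smul] at h2
        exact hp2ne v hv3 hv0 h2
      refine ⟨v, hv3, hv0, ?_⟩
      rw [h1, h2, span_pair_smul α β a b hα hβ, hspanH]
    · rintro ⟨v, hv, hv0, rfl⟩
      refine ⟨hspan2 v hv hv0, ?_, ?_, ?_⟩
      · exact one_le_finrank_of_mem _ (p₁ v)
          ⟨Submodule.subset_span (Set.mem_insert _ _), hp₁ v⟩ (hp1ne v hv hv0)
      · exact one_le_finrank_of_mem _ (p₂ v)
          ⟨Submodule.subset_span (Set.mem_insert_of_mem _ rfl), hp₂ v⟩ (hp2ne v hv hv0)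
      · exact one_le_finrank_of_mem _ v ⟨hvmem v, hv⟩ hv0
  · intro v w hv hv0 hw hw0
    constructor
    · intro hspan
      have hwH : w ∈ Submodule.span ℂ {p₁ v, p₂ v} := by
        rw [hspan]
        exact hvmem w
      exact hkey v w hv hv0 hw hw0 hwH
    · rintro ⟨c, hc, rfl⟩
      rw [map_smul, map_smul]
      exact (span_pair_smul c c (p₁ v) (p₂ v) hc hc).symm
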